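/- arXiv:1307.5863 — 2 statements merged into one kernel-verified Lean document; each statement's English description precedes it below -/
import Mathlib

section
/- The function h(x) = √3 (x² − 1) φ(x) Φ(x) + (√3/(2π)) x e^{−x²} + (√3/√π) e^{−3x²/4} Φ(x/√2) satisfies ∫_{−∞}^∞ h(x) dx = 1, where φ and Φ are the standard normal density and CDF. -/
open MeasureTheory Real Set Filter Topology

private lemma half_integral_aux {g C : ℝ → ℝ} (hg : Integrable g) (hge : ∀ x, g (-x) = g x)
    (hgC : Integrable (fun x => g x * C x)) (hC : ∀ x, C (-x) = 1 - C x) :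
    ∫ x, g x * C x = (∫ x, g x) / 2 := by
  have h1 : ∫ x, g (-x) * C (-x) = ∫ x, g x * C x :=
    integral_neg_eq_self (fun x => g x * C x) volume
  have h2 : (fun x => g (-x) * C (-x)) = fun x => g x - g x * C x := by
    funext x; rw [hge, hC]; ring
  rw [h2, integral_sub hg hgC] at h1
  linarith

/-- The density `h` of the height of a local maximum of an isotropic Gaussian field
on ℝ² in the case `κ = 1` integrates to 1. -/
theorem height_density_R2_kappa_one_integral (φ Φ : ℝ → ℝ)
    (hφ : ∀ x, φ x = (Real.sqrt (2 * π))⁻¹ * Real.exp (-x ^ 2 / 2))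
    (hΦ : ∀ x, Φ x = ∫ t in Set.Iic x, φ t) :
    ∫ x, (Real.sqrt 3 * (x ^ 2 - 1) * φ x * Φ x
        + Real.sqrt 3 / (2 * π) * x * Real.exp (-x ^ 2)
        + Real.sqrt 3 / Real.sqrt π * Real.exp (-3 * x ^ 2 / 4)
            * Φ (x / Real.sqrt 2)) = 1 := by
  have h2π : (0:ℝ) < 2 * π := by positivity
  have hs2π : Real.sqrt (2 * π) ≠ 0 := by positivity
  have hφeq : ∀ x, φ x = (Real.sqrt (2 * π))⁻¹ * rexp (-(1/2) * x ^ 2) := by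
    intro x
    rw [hφ x]
    have : -x ^ 2 / 2 = -(1/2) * x ^ 2 := by ring
    rw [this]
  -- basic integrability
  have hexp : Integrable (fun x : ℝ => rexp (-(1/2) * x ^ 2)) :=
    integrable_exp_neg_mul_sq (by norm_num)
  have hφint : Integrable φ :=
    (hexp.const_mul ((Real.sqrt (2 * π))⁻¹)).congr (ae_of_all _ fun x => (hφeq x).symm)
  have hφnn : ∀ x, 0 ≤ φ x := fun x => by rw [hφeq x]; positivity
  have hφeven : ∀ x, φ (-x) = φ x := fun x => by rw [hφeq, hφeq, neg_sq]
  -- total mass of φ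
  have hφtotal : ∫ x, φ x = 1 := by
    have h1 : ∫ x, φ x = (Real.sqrt (2 * π))⁻¹ * ∫ x, rexp (-(1/2) * x ^ 2) := by
      simp_rw [hφeq]; exact integral_const_mul _ _
    rw [h1, integral_gaussian]
    have : π / (1/2) = 2 * π := by ring
    rw [this, inv_mul_cancel₀ hs2π]
  -- properties of Φ
  have hΦmono : Monotone Φ := by
    intro a b hab
    rw [hΦ a, hΦ b]
    exact setIntegral_mono_set hφint.integrableOn (Eventually.of_forall hφnn)
      (HasSubset.Subset.eventuallyLE (Iic_subset_Iic.mpr hab))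
  have hΦmeas : Measurable Φ := hΦmono.measurable
  have hΦ0 : ∀ x, 0 ≤ Φ x := fun x => by
    rw [hΦ x]; exact setIntegral_nonneg measurableSet_Iic fun t _ => hφnn t
  have hΦ1 : ∀ x, Φ x ≤ 1 := fun x => by
    rw [hΦ x, ← hφtotal]
    exact setIntegral_le_integral hφint (Eventually.of_forall hφnn)
  have hΦbd : ∀ x, ‖Φ x‖ ≤ 1 := fun x => by
    rw [Real.norm_eq_abs, abs_le]; exact ⟨by linarith [hΦ0 x], hΦ1 x⟩
  have hΦneg : ∀ x, Φ (-x) = 1 - Φ x := by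
    intro x
    have h1 : ∫ t in Iic (-x), φ t = ∫ t in Ioi x, φ t := by
      have := integral_comp_neg_Iic (-x) φ
      rw [neg_neg] at this
      rw [← this]
      exact setIntegral_congr_fun measurableSet_Iic fun t _ => (hφeven t).symm
    have h2 : (∫ t in Iic x, φ t) + ∫ t in Ioi x, φ t = ∫ t, φ t :=
      intervalIntegral.integral_Iic_add_Ioi hφint.integrableOn hφint.integrableOn
    rw [hΦ (-x), hΦ x, h1, hφtotal] at *
    linarith
  -- integrability of x^2 * exp(-x^2/2)
  have hx2exp : Integrable (fun x : ℝ => x ^ 2 * rexp (-(1/2) * x ^ 2)) := by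
    have := integrable_rpow_mul_exp_neg_mul_sq (b := 1/2) (by norm_num) (s := 2) (by norm_num)
    simpa [Real.rpow_two] using this
  -- integrability of the three pieces
  have hg1 : Integrable (fun x : ℝ => Real.sqrt 3 * (x ^ 2 - 1) * φ x) := by
    refine ((hx2exp.sub hexp).const_mul (Real.sqrt 3 * (Real.sqrt (2 * π))⁻¹)).congr
      (ae_of_all _ fun x => ?_)
    simp only [Pi.sub_apply]
    rw [hφeq]; ring
  have hf1 : Integrable (fun x : ℝ => Real.sqrt 3 * (x ^ 2 - 1) * φ x * Φ x) := by
    refine (Integrable.bdd_mul hg1 hΦmeas.aestronglyMeasurable (ae_of_all _ hΦbd)).congr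
      (ae_of_all _ fun x => ?_)
    beta_reduce
    ring
  have hf2 : Integrable (fun x : ℝ => Real.sqrt 3 / (2 * π) * x * rexp (-x ^ 2)) := by
    refine ((integrable_mul_exp_neg_mul_sq one_pos).const_mul (Real.sqrt 3 / (2 * π))).congr
      (ae_of_all _ fun x => ?_)
    beta_reduce
    rw [neg_one_mul]; ring
  have hg3 : Integrable (fun x : ℝ => Real.sqrt 3 / Real.sqrt π * rexp (-3 * x ^ 2 / 4)) := by
    refine ((integrable_exp_neg_mul_sq (b := 3/4) (by norm_num)).const_mul
      (Real.sqrt 3 / Real.sqrt π)).congr (ae_of_all _ fun x => ?_)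
    beta_reduce
    rw [show (-(3/4) : ℝ) * x ^ 2 = -3 * x ^ 2 / 4 by ring]
  have hf3 : Integrable (fun x : ℝ => Real.sqrt 3 / Real.sqrt π * rexp (-3 * x ^ 2 / 4)
      * Φ (x / Real.sqrt 2)) := by
    refine (Integrable.bdd_mul hg3
      ((hΦmeas.comp (measurable_id.div_const (Real.sqrt 2))).aestronglyMeasurable)
      (ae_of_all _ fun x => hΦbd _)).congr (ae_of_all _ fun x => ?_)
    simp only [Function.comp_apply, id_eq]
    ring
  -- ∫ (x^2 - 1) exp(-x^2/2) = 0 by FTC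
  have hF'int : Integrable (fun x : ℝ => (x ^ 2 - 1) * rexp (-(1/2) * x ^ 2)) :=
    (hx2exp.sub hexp).congr (ae_of_all _ fun x => by simp only [Pi.sub_apply]; ring)
  have hFTC : ∫ x, (x ^ 2 - 1) * rexp (-(1/2) * x ^ 2) = 0 := by
    set F : ℝ → ℝ := fun x => -x * rexp (-(1/2) * x ^ 2) with hF
    have hderiv : ∀ x, HasDerivAt F ((x ^ 2 - 1) * rexp (-(1/2) * x ^ 2)) x := by
      intro x
      have hp : HasDerivAt (fun x : ℝ => x ^ 2) (2 * x) x := by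
        simpa using hasDerivAt_pow 2 x
      have h2 := ((hp.const_mul (-(1/2) : ℝ)).exp)
      have h3 := ((hasDerivAt_id x).neg).mul h2
      refine h3.congr_deriv ?_
      simp only [Pi.neg_apply, id_eq]
      ring
    -- tendsto at infinity
    have h0 : Tendsto (fun x : ℝ => |x| ^ (1:ℝ) * rexp (-(1/2) * x ^ 2)) (cocompact ℝ) (𝓝 0) :=
      tendsto_rpow_abs_mul_exp_neg_mul_sq_cocompact (by norm_num) 1
    rw [cocompact_eq_atBot_atTop] at h0
    have hnorm : ∀ x : ℝ, ‖F x‖ = |x| ^ (1:ℝ) * rexp (-(1/2) * x ^ 2) := by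
      intro x
      rw [hF, Real.rpow_one, Real.norm_eq_abs, abs_mul, abs_neg,
        abs_of_pos (Real.exp_pos _)]
    have htop : Tendsto F atTop (𝓝 0) :=
      squeeze_zero_norm (fun x => le_of_eq (hnorm x)) (h0.mono_left le_sup_right)
    have hbot : Tendsto F atBot (𝓝 0) :=
      squeeze_zero_norm (fun x => le_of_eq (hnorm x)) (h0.mono_left le_sup_left)
    have hIoi : ∫ x in Ioi 0, (x ^ 2 - 1) * rexp (-(1/2) * x ^ 2) = 0 - F 0 :=
      integral_Ioi_of_hasDerivAt_of_tendsto' (fun x _ => hderiv x) hF'int.integrableOn htop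
    have hIic : ∫ x in Iic 0, (x ^ 2 - 1) * rexp (-(1/2) * x ^ 2) = F 0 - 0 :=
      integral_Iic_of_hasDerivAt_of_tendsto' (fun x _ => hderiv x) hF'int.integrableOn hbot
    have := intervalIntegral.integral_Iic_add_Ioi (b := 0)
      (f := fun x : ℝ => (x ^ 2 - 1) * rexp (-(1/2) * x ^ 2))
      hF'int.integrableOn hF'int.integrableOn
    rw [← this, hIoi, hIic]
    ring
  -- first integral
  have hI1 : ∫ x, Real.sqrt 3 * (x ^ 2 - 1) * φ x * Φ x = 0 := by
    have heven : ∀ x, Real.sqrt 3 * ((-x) ^ 2 - 1) * φ (-x) = Real.sqrt 3 * (x ^ 2 - 1) * φ x :=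
      fun x => by rw [hφeven, neg_sq]
    have h := half_integral_aux hg1 heven hf1 hΦneg
    have hz : ∫ x, Real.sqrt 3 * (x ^ 2 - 1) * φ x = 0 := by
      have h1 : ∫ x, Real.sqrt 3 * (x ^ 2 - 1) * φ x
          = ∫ x, (Real.sqrt 3 * (Real.sqrt (2 * π))⁻¹)
              * ((x ^ 2 - 1) * rexp (-(1/2) * x ^ 2)) := by
        refine integral_congr_ae (ae_of_all _ fun x => ?_)
        beta_reduce
        rw [hφeq]; ring
      rw [h1, integral_const_mul, hFTC, mul_zero]
    rw [h, hz, zero_div]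
  -- second integral (odd function)
  have hI2 : ∫ x, Real.sqrt 3 / (2 * π) * x * rexp (-x ^ 2) = 0 := by
    have h := integral_neg_eq_self (fun x => Real.sqrt 3 / (2 * π) * x * rexp (-x ^ 2)) volume
    have h2 : (fun x : ℝ => Real.sqrt 3 / (2 * π) * (-x) * rexp (-(-x) ^ 2))
        = fun x => -(Real.sqrt 3 / (2 * π) * x * rexp (-x ^ 2)) := by
      funext x; rw [neg_sq]; ring
    rw [h2, integral_neg] at h
    linarith
  -- third integral
  have hI3 : ∫ x, Real.sqrt 3 / Real.sqrt π * rexp (-3 * x ^ 2 / 4) * Φ (x / Real.sqrt 2) = 1 := by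
    have heven : ∀ x, Real.sqrt 3 / Real.sqrt π * rexp (-3 * (-x) ^ 2 / 4)
        = Real.sqrt 3 / Real.sqrt π * rexp (-3 * x ^ 2 / 4) := fun x => by rw [neg_sq]
    have hCneg : ∀ x, Φ (-x / Real.sqrt 2) = 1 - Φ (x / Real.sqrt 2) := by
      intro x
      rw [neg_div, hΦneg]
    have h := half_integral_aux hg3 heven hf3 hCneg
    rw [h]
    have h1 : ∫ x, Real.sqrt 3 / Real.sqrt π * rexp (-3 * x ^ 2 / 4)
        = Real.sqrt 3 / Real.sqrt π * ∫ x, rexp (-(3/4) * x ^ 2) := by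
      rw [← integral_const_mul]
      refine integral_congr_ae (ae_of_all _ fun x => ?_)
      beta_reduce
      rw [show (-(3/4) : ℝ) * x ^ 2 = -3 * x ^ 2 / 4 by ring]
    rw [h1, integral_gaussian]
    have h4 : Real.sqrt (π / (3/4)) = Real.sqrt π / (Real.sqrt 3 / 2) := by
      rw [Real.sqrt_div pi_pos.le]
      congr 1
      rw [show (3/4 : ℝ) = 3 / 2 ^ 2 by norm_num, Real.sqrt_div' 3 (by norm_num),
        Real.sqrt_sq (by norm_num)]
    rw [h4]
    have hs3 : Real.sqrt 3 ≠ 0 := by positivity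
    have hsπ : Real.sqrt π ≠ 0 := by positivity
    field_simp
  have hsplit : ∫ x, (Real.sqrt 3 * (x ^ 2 - 1) * φ x * Φ x
        + Real.sqrt 3 / (2 * π) * x * Real.exp (-x ^ 2)
        + Real.sqrt 3 / Real.sqrt π * Real.exp (-3 * x ^ 2 / 4) * Φ (x / Real.sqrt 2))
      = (∫ x, (Real.sqrt 3 * (x ^ 2 - 1) * φ x * Φ x
          + Real.sqrt 3 / (2 * π) * x * Real.exp (-x ^ 2)))
        + ∫ x, Real.sqrt 3 / Real.sqrt π * Real.exp (-3 * x ^ 2 / 4) * Φ (x / Real.sqrt 2) :=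
    integral_add (hf1.add hf2) hf3
  have hsplit2 : ∫ x, (Real.sqrt 3 * (x ^ 2 - 1) * φ x * Φ x
        + Real.sqrt 3 / (2 * π) * x * Real.exp (-x ^ 2))
      = (∫ x, Real.sqrt 3 * (x ^ 2 - 1) * φ x * Φ x)
        + ∫ x, Real.sqrt 3 / (2 * π) * x * Real.exp (-x ^ 2) := integral_add hf1 hf2
  rw [hsplit, hsplit2, hI1, hI2, hI3]
  norm_num
end

section
/- The function h(x) = (2x² − 1) φ(x) Φ(√2 x) + (x√2/(2π)) e^{−3x²/2} + (1/√π) e^{−x²} Φ(x) satisfies ∫_{−∞}^∞ h(x) dx = 1, where φ and Φ are the standard normal density and CDF. -/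
open MeasureTheory Real
open Set Filter Topology

/-- The density `h` of the height of a local maximum of the isotropic Gaussian field on
the 2-sphere with covariance `⟨t,s⟩²` integrates to 1. -/
theorem height_density_S2_integral (φ Φ : ℝ → ℝ)
    (hφ : ∀ x, φ x = (Real.sqrt (2 * π))⁻¹ * Real.exp (-x ^ 2 / 2))
    (hΦ : ∀ x, Φ x = ∫ t in Set.Iic x, φ t) :
    ∫ x, ((2 * x ^ 2 - 1) * φ x * Φ (Real.sqrt 2 * x)
        + x * Real.sqrt 2 / (2 * π) * Real.exp (-3 * x ^ 2 / 2)
        + (Real.sqrt π)⁻¹ * Real.exp (-x ^ 2) * Φ x) = 1 := by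
  have hπ : (0:ℝ) < π := Real.pi_pos
  have hs2π : (0:ℝ) < Real.sqrt (2 * π) := Real.sqrt_pos.mpr (by positivity)
  -- rewrite φ with a normalized exponent
  have hφ' : ∀ x, φ x = (Real.sqrt (2 * π))⁻¹ * Real.exp (-(1/2) * x ^ 2) := by
    intro x; rw [hφ]; congr 1; ring
  have hφ_cont : Continuous φ := by
    have : Continuous fun x : ℝ => (Real.sqrt (2 * π))⁻¹ * Real.exp (-(1/2) * x ^ 2) := by
      fun_prop
    exact this.congr fun x => (hφ' x).symm
  have hφ_nonneg : ∀ x, 0 ≤ φ x := fun x => by rw [hφ']; positivity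
  have hexp_int : ∀ b : ℝ, 0 < b → Integrable (fun x : ℝ => Real.exp (-b * x ^ 2)) :=
    fun b hb => integrable_exp_neg_mul_sq hb
  have hx2_int : ∀ b : ℝ, 0 < b → Integrable (fun x : ℝ => x ^ 2 * Real.exp (-b * x ^ 2)) := by
    intro b hb
    have := integrable_rpow_mul_exp_neg_mul_sq hb (s := 2) (by norm_num)
    simpa [Real.rpow_natCast] using this
  have hφ_int : Integrable φ := by
    have := ((hexp_int (1/2) (by norm_num)).const_mul (Real.sqrt (2 * π))⁻¹)
    exact this.congr (Eventually.of_forall fun x => (hφ' x).symm)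
  have hφ_total : ∫ x, φ x = 1 := by
    have h1 : ∫ x, φ x = (Real.sqrt (2 * π))⁻¹ * ∫ x : ℝ, Real.exp (-(1/2) * x ^ 2) := by
      rw [← integral_const_mul]
      exact integral_congr_ae (Eventually.of_forall fun x => hφ' x)
    rw [h1, integral_gaussian, show π / (1/2 : ℝ) = 2 * π by ring,
      inv_mul_cancel₀ (ne_of_gt hs2π)]
  have hΦ_nonneg : ∀ x, 0 ≤ Φ x := fun x => by
    rw [hΦ]; exact setIntegral_nonneg measurableSet_Iic fun t _ => hφ_nonneg t
  have hΦ_le : ∀ x, Φ x ≤ 1 := fun x => by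
    rw [hΦ, ← hφ_total]
    exact setIntegral_le_integral hφ_int (Eventually.of_forall hφ_nonneg)
  have hΦ_cont : Continuous Φ := by
    have h1 : ∀ x, Φ x = (∫ t in Iic (0:ℝ), φ t) + ∫ t in (0:ℝ)..x, φ t := by
      intro x
      rw [hΦ, ← intervalIntegral.integral_Iic_sub_Iic hφ_int.integrableOn hφ_int.integrableOn]
      ring
    have : Continuous fun x : ℝ => (∫ t in Iic (0:ℝ), φ t) + ∫ t in (0:ℝ)..x, φ t :=
      continuous_const.add (hφ_int.continuous_primitive 0)
    exact this.congr fun x => (h1 x).symm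
  have hφ_even : ∀ x, φ (-x) = φ x := fun x => by rw [hφ', hφ', neg_pow]; norm_num
  have hΦ_add : ∀ y, Φ y + Φ (-y) = 1 := by
    intro y
    have h1 : Φ (-y) = ∫ t in Ioi y, φ t := by
      rw [hΦ, ← integral_comp_neg_Ioi]
      exact setIntegral_congr_fun measurableSet_Ioi fun t _ => hφ_even t
    rw [hΦ y, h1, intervalIntegral.integral_Iic_add_Ioi hφ_int.integrableOn hφ_int.integrableOn, hφ_total]
  -- integration by parts: ∫ (x²-1) e^{-x²/2} = 0
  have hg_deriv : ∀ x : ℝ, HasDerivAt (fun y : ℝ => -y * Real.exp (-(1/2) * y ^ 2))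
      ((x ^ 2 - 1) * Real.exp (-(1/2) * x ^ 2)) x := by
    intro x
    have h1 : HasDerivAt (fun y : ℝ => -(1/2 : ℝ) * y ^ 2) (-(1/2 : ℝ) * (2 * x ^ 1)) x :=
      (hasDerivAt_pow 2 x).const_mul _
    have h4 : HasDerivAt (fun y : ℝ => -y * Real.exp (-(1/2) * y ^ 2)) (-1 * Real.exp (-(1/2) * x ^ 2) + -x * (Real.exp (-(1/2) * x ^ 2) * (-(1/2) * (2 * x ^ 1)))) x := (hasDerivAt_neg x).mul h1.exp
    convert h4 using 1; ring
  have hf'_int : Integrable (fun x : ℝ => (x ^ 2 - 1) * Real.exp (-(1/2) * x ^ 2)) := by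
    have := (hx2_int (1/2) (by norm_num)).sub (hexp_int (1/2) (by norm_num))
    exact this.congr (Eventually.of_forall fun x => by simp only [Pi.sub_apply]; ring)
  have hg_tendsto_abs : ∀ l : Filter ℝ, l ≤ cocompact ℝ →
      Tendsto (fun y : ℝ => -y * Real.exp (-(1/2) * y ^ 2)) l (𝓝 0) := by
    intro l hl
    have h0 : Tendsto (fun x : ℝ => |x| * Real.exp (-(1/2) * x ^ 2)) l (𝓝 0) := by
      have := tendsto_rpow_abs_mul_exp_neg_mul_sq_cocompact (show (0:ℝ) < 1/2 by norm_num) 1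
      simpa using this.mono_left hl
    refine squeeze_zero_norm (fun x => ?_) h0
    rw [Real.norm_eq_abs, abs_mul, abs_neg, Real.abs_exp]
  have hparts : ∫ x : ℝ, (x ^ 2 - 1) * Real.exp (-(1/2) * x ^ 2) = 0 := by
    have hIoi : ∫ x in Ioi (0:ℝ), (x ^ 2 - 1) * Real.exp (-(1/2) * x ^ 2)
        = 0 - (-(0:ℝ) * Real.exp (-(1/2) * (0:ℝ) ^ 2)) :=
      integral_Ioi_of_hasDerivAt_of_tendsto' (fun x _ => hg_deriv x) hf'_int.integrableOn
        (hg_tendsto_abs atTop _root_.atTop_le_cocompact)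
    have hIic : ∫ x in Iic (0:ℝ), (x ^ 2 - 1) * Real.exp (-(1/2) * x ^ 2)
        = (-(0:ℝ) * Real.exp (-(1/2) * (0:ℝ) ^ 2)) - 0 :=
      integral_Iic_of_hasDerivAt_of_tendsto' (fun x _ => hg_deriv x) hf'_int.integrableOn
        (hg_tendsto_abs atBot _root_.atBot_le_cocompact)
    rw [← intervalIntegral.integral_Iic_add_Ioi hf'_int.integrableOn hf'_int.integrableOn, hIoi, hIic]
    ring
  -- value of ∫ (2x²-1) φ
  have hA_int : Integrable (fun x : ℝ => (2 * x ^ 2 - 1) * φ x) := by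
    have := ((hf'_int.const_mul 2).add (hexp_int (1/2) (by norm_num))).const_mul
      (Real.sqrt (2 * π))⁻¹
    exact this.congr (Eventually.of_forall fun x => by simp only [Pi.add_apply]; rw [hφ' x]; ring)
  have hA : ∫ x : ℝ, (2 * x ^ 2 - 1) * φ x = 1 := by
    have h1 : ∫ x : ℝ, (2 * x ^ 2 - 1) * φ x
        = (Real.sqrt (2 * π))⁻¹ * ∫ x : ℝ,
            (2 * ((x ^ 2 - 1) * Real.exp (-(1/2) * x ^ 2)) + Real.exp (-(1/2) * x ^ 2)) := by
      rw [← integral_const_mul]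
      exact integral_congr_ae (Eventually.of_forall fun x => by simp only [hφ']; ring)
    rw [h1, integral_add (hf'_int.const_mul 2) (hexp_int (1/2) (by norm_num)),
      integral_const_mul, hparts, integral_gaussian, show π / (1/2 : ℝ) = 2 * π by ring]
    rw [mul_zero, zero_add, inv_mul_cancel₀ (ne_of_gt hs2π)]
  -- value of ∫ (√π)⁻¹ e^{-x²}
  have hB_int : Integrable (fun x : ℝ => (Real.sqrt π)⁻¹ * Real.exp (-x ^ 2)) := by
    have := (hexp_int 1 one_pos).const_mul (Real.sqrt π)⁻¹
    exact this.congr (Eventually.of_forall fun x => by norm_num)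
  have hB : ∫ x : ℝ, (Real.sqrt π)⁻¹ * Real.exp (-x ^ 2) = 1 := by
    have h1 : ∫ x : ℝ, (Real.sqrt π)⁻¹ * Real.exp (-x ^ 2)
        = (Real.sqrt π)⁻¹ * ∫ x : ℝ, Real.exp (-1 * x ^ 2) := by
      rw [← integral_const_mul]
      exact integral_congr_ae (Eventually.of_forall fun x => by norm_num)
    rw [h1, integral_gaussian, div_one,
      inv_mul_cancel₀ (ne_of_gt (Real.sqrt_pos.mpr hπ))]
  -- the integrand
  set F : ℝ → ℝ := fun x => (2 * x ^ 2 - 1) * φ x * Φ (Real.sqrt 2 * x)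
      + x * Real.sqrt 2 / (2 * π) * Real.exp (-3 * x ^ 2 / 2)
      + (Real.sqrt π)⁻¹ * Real.exp (-x ^ 2) * Φ x with hF
  -- integrability of F
  have hT1 : Integrable (fun x : ℝ => (2 * x ^ 2 - 1) * φ x * Φ (Real.sqrt 2 * x)) := by
    have hmeas : AEStronglyMeasurable
        (fun x : ℝ => (2 * x ^ 2 - 1) * φ x * Φ (Real.sqrt 2 * x)) volume := by
      exact (((continuous_const.mul (continuous_pow 2)).sub continuous_const).mul hφ_cont
        |>.mul (hΦ_cont.comp (continuous_const.mul continuous_id))).aestronglyMeasurable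
    have hbd : Integrable (fun x : ℝ => (2 * x ^ 2 + 1) * φ x) := by
      have := ((hx2_int (1/2) (by norm_num)).const_mul 2 |>.add
        (hexp_int (1/2) (by norm_num))).const_mul (Real.sqrt (2 * π))⁻¹
      exact this.congr (Eventually.of_forall fun x => by simp only [Pi.add_apply]; rw [hφ' x]; ring)
    refine hbd.mono' hmeas (Eventually.of_forall fun x => ?_)
    rw [Real.norm_eq_abs, abs_mul, abs_mul]
    have h1 : |2 * x ^ 2 - 1| ≤ 2 * x ^ 2 + 1 := by
      have := abs_sub (2 * x ^ 2) (1:ℝ)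
      calc |2 * x ^ 2 - 1| ≤ |2 * x ^ 2| + |(1:ℝ)| := abs_sub _ _
        _ = 2 * x ^ 2 + 1 := by rw [abs_of_nonneg (by positivity), abs_one]
    have h2 : |Φ (Real.sqrt 2 * x)| ≤ 1 :=
      abs_le.mpr ⟨by linarith [hΦ_nonneg (Real.sqrt 2 * x)], hΦ_le _⟩
    calc |2 * x ^ 2 - 1| * |φ x| * |Φ (Real.sqrt 2 * x)|
        ≤ (2 * x ^ 2 + 1) * |φ x| * 1 := by
          apply mul_le_mul (mul_le_mul h1 le_rfl (abs_nonneg _) (by positivity)) h2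
            (abs_nonneg _) (by positivity)
      _ = (2 * x ^ 2 + 1) * φ x := by rw [mul_one, abs_of_nonneg (hφ_nonneg x)]
  have hT2 : Integrable (fun x : ℝ => x * Real.sqrt 2 / (2 * π) * Real.exp (-3 * x ^ 2 / 2)) := by
    have := (integrable_mul_exp_neg_mul_sq (show (0:ℝ) < 3/2 by norm_num)).const_mul
      (Real.sqrt 2 / (2 * π))
    refine this.congr (Eventually.of_forall fun x => ?_)
    show Real.sqrt 2 / (2 * π) * (x * Real.exp (-(3/2) * x ^ 2)) = _
    rw [show (-(3/2 : ℝ) * x ^ 2) = -3 * x ^ 2 / 2 by ring]; ring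
  have hT3 : Integrable (fun x : ℝ => (Real.sqrt π)⁻¹ * Real.exp (-x ^ 2) * Φ x) := by
    have hmeas : AEStronglyMeasurable
        (fun x : ℝ => (Real.sqrt π)⁻¹ * Real.exp (-x ^ 2) * Φ x) volume := by
      exact ((continuous_const.mul (Real.continuous_exp.comp
        (continuous_pow 2).neg)).mul hΦ_cont).aestronglyMeasurable
    refine hB_int.mono' hmeas (Eventually.of_forall fun x => ?_)
    rw [Real.norm_eq_abs, abs_mul]
    have h2 : |Φ x| ≤ 1 := abs_le.mpr ⟨by linarith [hΦ_nonneg x], hΦ_le x⟩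
    calc |(Real.sqrt π)⁻¹ * Real.exp (-x ^ 2)| * |Φ x|
        ≤ |(Real.sqrt π)⁻¹ * Real.exp (-x ^ 2)| * 1 :=
          mul_le_mul_of_nonneg_left h2 (abs_nonneg _)
      _ = (Real.sqrt π)⁻¹ * Real.exp (-x ^ 2) := by
          rw [mul_one, abs_of_nonneg (by positivity)]
  have hFint : Integrable F := (hT1.add hT2).add hT3
  have hFneg_int : Integrable (fun x => F (-x)) := hFint.comp_neg
  have hkey : ∀ x, F x + F (-x) = (2 * x ^ 2 - 1) * φ x + (Real.sqrt π)⁻¹ * Real.exp (-x ^ 2) := by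
    intro x
    have h1 : Φ (-(Real.sqrt 2 * x)) = 1 - Φ (Real.sqrt 2 * x) := by
      linarith [hΦ_add (Real.sqrt 2 * x)]
    have h2 : Φ (-x) = 1 - Φ x := by linarith [hΦ_add x]
    simp only [hF]
    rw [show ((-x : ℝ)) ^ 2 = x ^ 2 by ring, mul_neg, hφ_even, h1, h2]
    ring
  have hsum : (∫ x, F x) + (∫ x, F (-x)) = 2 := by
    rw [← integral_add hFint hFneg_int]
    have := integral_congr_ae (μ := (volume : Measure ℝ)) (Eventually.of_forall hkey)
    rw [this, integral_add hA_int hB_int, hA, hB]; norm_num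
  have hneg : ∫ x, F (-x) = ∫ x, F x := integral_neg_eq_self F _
  rw [hneg] at hsum
  show ∫ x, F x = 1
  linarith
end
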